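/- (Wintner orthogonal decomposition for F) Let F: ℕ → ℂ have all Wintner coefficients Win_q F. Then for every a ∈ ℕ and every prime P ≥ a, F(a) = ∑_{q P-smooth} (Win_q F) c_q(a) − ∑_{d | a} ∑_{r P-sifted, r > 1} F'(dr)/r. -/

import Mathlib

open scoped BigOperators Classical
open Filter

/-- `n` is `P`-smooth: every prime factor of `n` is at most `P`. -/
def IsSmooth (P n : ℕ) : Prop := ∀ p : ℕ, p.Prime → p ∣ n → p ≤ P

/-- `n` is `P`-sifted: every prime factor of `n` exceeds `P`. -/
def IsSifted (P n : ℕ) : Prop := ∀ p : ℕ, p.Prime → p ∣ n → P < p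

/-- The Ramanujan sum `c_q(a)`, via Kluyver's formula. -/
noncomputable def ramanujanSum (q a : ℕ) : ℤ :=
  ∑ d ∈ (Nat.gcd a q).divisors, (d : ℤ) * ArithmeticFunction.moebius (q / d)

/-- The Eratosthenes transform `F' = F ∗ μ`. -/
noncomputable def eratosthenes (F : ℕ → ℂ) (d : ℕ) : ℂ :=
  ∑ e ∈ d.divisors, (ArithmeticFunction.moebius (d / e) : ℂ) * F e

section Aux
open ArithmeticFunction

/-- The "smooth kernel": product of all primes up to `P`. -/
noncomputable def sKer (P : ℕ) : ℕ := ∏ p ∈ (Finset.range (P+1)).filter Nat.Prime, p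

lemma sKer_pos (P : ℕ) : 0 < sKer P :=
  Finset.prod_pos fun p hp => (Finset.mem_filter.mp hp).2.pos

lemma prime_dvd_sKer {P p : ℕ} (pp : p.Prime) : p ∣ sKer P ↔ p ≤ P := by
  constructor
  · intro h
    obtain ⟨q, hq, hpq⟩ := pp.prime.exists_mem_finset_dvd h
    obtain ⟨hq1, hq2⟩ := Finset.mem_filter.mp hq
    have := (Nat.prime_dvd_prime_iff_eq pp hq2).mp hpq
    subst this
    have := Finset.mem_range.mp hq1
    omega
  · intro h
    exact Finset.dvd_prod_of_mem _ (Finset.mem_filter.mpr ⟨Finset.mem_range.mpr (by omega), pp⟩)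

lemma smooth_sKer (P : ℕ) : IsSmooth P (sKer P) :=
  fun p pp h => (prime_dvd_sKer pp).mp h

lemma dvd_sKer {P n : ℕ} (hn : Squarefree n) (hs : IsSmooth P n) : n ∣ sKer P := by
  have h1 : n = ∏ p ∈ n.primeFactors, p := (Nat.prod_primeFactors_of_squarefree hn).symm
  rw [h1]
  exact Finset.prod_dvd_prod_of_subset _ _ _ fun p hp => by
    have hpp := Nat.prime_of_mem_primeFactors hp
    exact Finset.mem_filter.mpr ⟨Finset.mem_range.mpr
      (by have := hs p hpp (Nat.dvd_of_mem_primeFactors hp); omega), hpp⟩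

lemma smooth_of_dvd {P n m : ℕ} (h : m ∣ n) (hs : IsSmooth P n) : IsSmooth P m :=
  fun p pp hd => hs p pp (hd.trans h)

lemma isSmooth_mul {P a b : ℕ} (h1 : IsSmooth P a) (h2 : IsSmooth P b) : IsSmooth P (a*b) := by
  intro p pp hd
  rcases (Nat.Prime.dvd_mul pp).mp hd with h | h
  · exact h1 p pp h
  · exact h2 p pp h

lemma smooth_of_le {P a : ℕ} (ha : 0 < a) (haP : a ≤ P) : IsSmooth P a :=
  fun p pp hd => le_trans (Nat.le_of_dvd ha hd) haP

lemma sifted_iff_coprime {P k : ℕ} :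
    IsSifted P k ↔ Nat.Coprime (sKer P) k := by
  constructor
  · intro h
    by_contra hc
    obtain ⟨p, pp, hpQ, hpk⟩ := Nat.Prime.not_coprime_iff_dvd.mp hc
    have := (prime_dvd_sKer pp).mp hpQ
    have := h p pp hpk
    omega
  · intro h p pp hpk
    by_contra hle
    push_neg at hle
    have hpQ : p ∣ sKer P := (prime_dvd_sKer pp).mpr hle
    have := Nat.eq_one_of_dvd_coprimes h hpQ hpk
    exact pp.one_lt.ne' this

lemma divisors_filter_dvd {n k : ℕ} (hn : n ≠ 0) (hk : k ≠ 0) :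
    n.divisors.filter (· ∣ k) = (Nat.gcd n k).divisors := by
  ext m
  simp only [Finset.mem_filter, Nat.mem_divisors, Nat.dvd_gcd_iff]
  constructor
  · rintro ⟨⟨h1, _⟩, h2⟩; exact ⟨⟨h1, h2⟩, Nat.gcd_ne_zero_left hn⟩
  · rintro ⟨⟨h1, h2⟩, _⟩; exact ⟨⟨h1, hn⟩, h2⟩

lemma sum_moebius_divisors (n : ℕ) :
    (∑ m ∈ n.divisors, ArithmeticFunction.moebius m) = if n = 1 then 1 else 0 := by
  have h : ((ArithmeticFunction.moebius * (ArithmeticFunction.zeta : ArithmeticFunction ℤ) : ArithmeticFunction ℤ)) n = (1 : ArithmeticFunction ℤ) n := by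
    rw [ArithmeticFunction.moebius_mul_coe_zeta]
  rw [ArithmeticFunction.coe_mul_zeta_apply] at h
  rw [h, ArithmeticFunction.one_apply]

lemma sift_indicator {P k : ℕ} (hk : k ≠ 0) :
    (∑ m ∈ (sKer P).divisors.filter (· ∣ k), (ArithmeticFunction.moebius m : ℂ))
      = if IsSifted P k then 1 else 0 := by
  rw [divisors_filter_dvd (sKer_pos P).ne' hk]
  have : (∑ m ∈ (Nat.gcd (sKer P) k).divisors, (ArithmeticFunction.moebius m : ℂ))
      = ((∑ m ∈ (Nat.gcd (sKer P) k).divisors, ArithmeticFunction.moebius m : ℤ) : ℂ) := by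
    push_cast; ring
  rw [this, sum_moebius_divisors]
  by_cases h : IsSifted P k
  · rw [if_pos (sifted_iff_coprime.mp h), if_pos h]; norm_num
  · rw [if_neg (fun hc => h (sifted_iff_coprime.mpr hc)), if_neg h]; norm_num

lemma sum_divisors_mul (e n : ℕ) (he : e ∣ n) (hn : n ≠ 0) (f : ℕ → ℂ) :
    ∑ q ∈ n.divisors.filter (e ∣ ·), f q = ∑ m ∈ (n/e).divisors, f (e*m) := by
  have he0 : e ≠ 0 := fun h => hn (by simpa [h] using he)
  apply Finset.sum_nbij' (i := fun q => q / e) (j := fun m => e * m)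
  · intro q hq
    obtain ⟨⟨hq1, _⟩, hq2⟩ := by
      simpa only [Finset.mem_filter, Nat.mem_divisors] using hq
    refine Nat.mem_divisors.mpr ⟨?_, ?_⟩
    · rw [Nat.dvd_div_iff_mul_dvd he, Nat.mul_div_cancel' hq2]
      exact hq1
    · exact Nat.div_ne_zero_iff.mpr ⟨he0, Nat.le_of_dvd (Nat.pos_of_ne_zero hn) he⟩
  · intro m hm
    obtain ⟨hm1, _⟩ := Nat.mem_divisors.mp hm
    refine Finset.mem_filter.mpr ⟨Nat.mem_divisors.mpr ⟨?_, hn⟩, Dvd.intro m rfl⟩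
    calc e * m ∣ e * (n / e) := mul_dvd_mul_left e hm1
    _ = n := Nat.mul_div_cancel' he
  · intro q hq
    exact Nat.mul_div_cancel' (Finset.mem_filter.mp hq).2
  · intro m hm
    exact Nat.mul_div_cancel_left m (Nat.pos_of_ne_zero he0)
  · intro q hq
    rw [Nat.mul_div_cancel' (Finset.mem_filter.mp hq).2]

lemma sum_Icc_mul (d m x : ℕ) (hd : 0 < d) (f : ℕ → ℂ) :
    ∑ r ∈ Finset.Icc 1 x, (if m ∣ r then f (d*r) / r else 0)
      = d * ∑ n ∈ Finset.Icc 1 (d*x), (if d*m ∣ n then f n / n else 0) := by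
  have hrhs : (d:ℂ) * ∑ n ∈ Finset.Icc 1 (d*x), (if d*m ∣ n then f n / n else 0)
      = ∑ n ∈ (Finset.Icc 1 (d*x)).filter (fun n => d*m ∣ n), (d:ℂ) * (f n / n) := by
    rw [Finset.mul_sum, Finset.sum_filter]
    simp only [mul_ite, mul_zero]
  rw [hrhs, ← Finset.sum_filter]
  · apply Finset.sum_nbij' (i := fun r => d * r) (j := fun n => n / d)
    · intro r hr
      obtain ⟨hr1, hr2⟩ := Finset.mem_Icc.mp (Finset.mem_filter.mp hr).1
      refine Finset.mem_filter.mpr ⟨Finset.mem_Icc.mpr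
        ⟨Nat.one_le_iff_ne_zero.mpr (by positivity), Nat.mul_le_mul_left d hr2⟩,
        mul_dvd_mul_left d (Finset.mem_filter.mp hr).2⟩
    · intro n hn
      obtain ⟨hmem, hdvd⟩ := Finset.mem_filter.mp hn
      obtain ⟨hn1, hn2⟩ := Finset.mem_Icc.mp hmem
      have hdn : d ∣ n := (dvd_mul_right d m).trans hdvd
      refine Finset.mem_filter.mpr ⟨Finset.mem_Icc.mpr ⟨?_, ?_⟩, ?_⟩
      · exact (Nat.one_le_div_iff hd).mpr (Nat.le_of_dvd (by omega) hdn)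
      · exact Nat.div_le_of_le_mul (by omega)
      · rw [Nat.dvd_div_iff_mul_dvd hdn]
        exact hdvd
    · intro r hr
      exact Nat.mul_div_cancel_left r hd
    · intro n hn
      exact Nat.mul_div_cancel' ((dvd_mul_right d m).trans (Finset.mem_filter.mp hn).2)
    · intro r hr
      obtain ⟨hr1, hr2⟩ := Finset.mem_Icc.mp (Finset.mem_filter.mp hr).1
      have : (r : ℂ) ≠ 0 := Nat.cast_ne_zero.mpr (by omega)
      have hd' : (d : ℂ) ≠ 0 := Nat.cast_ne_zero.mpr hd.ne'
      push_cast
      field_simp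

lemma tendsto_sifted (F W : ℕ → ℂ)
    (hW : ∀ q : ℕ, 0 < q →
      Tendsto (fun x : ℕ => ∑ n ∈ Finset.Icc 1 x, if q ∣ n then eratosthenes F n / n else 0)
        atTop (nhds (W q)))
    (P d : ℕ) (hd : 0 < d) :
    Tendsto (fun x : ℕ =>
        ∑ r ∈ Finset.Icc 1 x, if IsSifted P r then eratosthenes F (d*r) / r else 0)
      atTop (nhds (∑ m ∈ (sKer P).divisors, (moebius m : ℂ) * (d * W (d*m)))) := by
  have key : ∀ x : ℕ,
      (∑ r ∈ Finset.Icc 1 x, if IsSifted P r then eratosthenes F (d*r) / r else 0)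
      = ∑ m ∈ (sKer P).divisors, (moebius m : ℂ) *
          ∑ r ∈ Finset.Icc 1 x, (if m ∣ r then eratosthenes F (d*r) / r else 0) := by
    intro x
    have h1 : ∀ r ∈ Finset.Icc 1 x,
        (if IsSifted P r then eratosthenes F (d*r) / r else 0)
        = ∑ m ∈ (sKer P).divisors,
            (if m ∣ r then (moebius m : ℂ) * (eratosthenes F (d*r) / r) else 0) := by
      intro r hr
      have hr0 : r ≠ 0 := by
        have := (Finset.mem_Icc.mp hr).1; omega
      rw [← Finset.sum_filter]
      rw [← Finset.sum_mul, sift_indicator hr0]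
      by_cases h : IsSifted P r <;> simp [h]
    rw [Finset.sum_congr rfl h1, Finset.sum_comm]
    apply Finset.sum_congr rfl
    intro m _
    rw [Finset.mul_sum]
    apply Finset.sum_congr rfl
    intro r _
    by_cases h : m ∣ r <;> simp [h]
  simp only [key]
  apply tendsto_finset_sum
  intro m hm
  apply Tendsto.const_mul
  have hm0 : 0 < m := Nat.pos_of_mem_divisors hm
  have hdm : 0 < d * m := by positivity
  have hmul : Tendsto (fun x : ℕ => d * x) atTop atTop :=
    tendsto_atTop_mono (fun x => Nat.le_mul_of_pos_left x hd) tendsto_id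
  have hcomp := (hW (d*m) hdm).comp hmul
  have heq : ∀ x : ℕ, ((fun x : ℕ => ∑ n ∈ Finset.Icc 1 x,
        if d*m ∣ n then eratosthenes F n / n else 0) ∘ (fun x : ℕ => d * x)) x * d
      = ∑ r ∈ Finset.Icc 1 x, (if m ∣ r then eratosthenes F (d*r) / r else 0) := by
    intro x
    rw [Function.comp_apply, sum_Icc_mul d m x hd (eratosthenes F)]
    ring
  have h2 := hcomp.mul_const (d : ℂ)
  simp only [heq] at h2
  convert h2 using 1
  ring

lemma sum_eratosthenes (F : ℕ → ℂ) (a : ℕ) (ha : 0 < a) :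
    ∑ d ∈ a.divisors, eratosthenes F d = F a := by
  have h : ∀ n > 0, ∑ x ∈ n.divisorsAntidiagonal, ((moebius x.fst : ℤ) : ℂ) * F x.snd
      = eratosthenes F n := by
    intro n hn
    rw [Nat.sum_divisorsAntidiagonal' (f := fun x y => ((moebius x : ℤ) : ℂ) * F y)]
    rfl
  exact (ArithmeticFunction.sum_eq_iff_sum_mul_moebius_eq.mpr h) a ha

lemma ram_vanish {P a q : ℕ} (hq : 0 < q) (hs : IsSmooth P q)
    (hnd : ¬ q ∣ a * sKer P) : ramanujanSum q a = 0 := by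
  unfold ramanujanSum
  apply Finset.sum_eq_zero
  intro e he
  obtain ⟨hed, _⟩ := Nat.mem_divisors.mp he
  have hea : e ∣ a := hed.trans (Nat.gcd_dvd_left a q)
  have heq : e ∣ q := hed.trans (Nat.gcd_dvd_right a q)
  by_cases hsq : Squarefree (q / e)
  · exfalso
    apply hnd
    have h1 : q / e ∣ sKer P := dvd_sKer hsq (smooth_of_dvd (Nat.div_dvd_of_dvd heq) hs)
    have h2 : q = e * (q / e) := (Nat.mul_div_cancel' heq).symm
    rw [h2]
    exact mul_dvd_mul hea h1
  · rw [ArithmeticFunction.moebius_eq_zero_of_not_squarefree hsq]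
    ring

lemma tsum_smooth (W : ℕ → ℂ) {P a : ℕ} (ha : 0 < a) (haP : a ≤ P) :
    (∑' q : {q : ℕ // 0 < q ∧ IsSmooth P q}, W (q : ℕ) * (ramanujanSum (q : ℕ) a : ℂ))
      = ∑ q ∈ (a * sKer P).divisors, W q * (ramanujanSum q a : ℂ) := by
  have hT : a * sKer P ≠ 0 := by have := sKer_pos P; positivity
  have hsm : IsSmooth P (a * sKer P) := isSmooth_mul (smooth_of_le ha haP) (smooth_sKer P)
  have h1 : (∑' q : {q : ℕ // 0 < q ∧ IsSmooth P q}, W (q : ℕ) * (ramanujanSum (q : ℕ) a : ℂ))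
      = ∑ q ∈ (a * sKer P).divisors.subtype (fun q => 0 < q ∧ IsSmooth P q),
          W (q : ℕ) * (ramanujanSum (q : ℕ) a : ℂ) := by
    apply tsum_eq_sum
    rintro ⟨q, hq0, hqs⟩ hb
    rw [Finset.mem_subtype] at hb
    have : ¬ q ∣ a * sKer P := fun hdvd => hb (Nat.mem_divisors.mpr ⟨hdvd, hT⟩)
    rw [ram_vanish hq0 hqs this]
    simp
  rw [h1, Finset.sum_subtype_eq_sum_filter (f := fun q => W q * (ramanujanSum q a : ℂ))]
  apply Finset.sum_congr
  · apply Finset.filter_true_of_mem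
    intro q hq
    obtain ⟨hqd, _⟩ := Nat.mem_divisors.mp hq
    exact ⟨Nat.pos_of_mem_divisors hq, smooth_of_dvd hqd hsm⟩
  · intro q _; rfl

lemma main_id (W : ℕ → ℂ) {P a : ℕ} (ha : 0 < a) (haP : a ≤ P) :
    ∑ q ∈ (a * sKer P).divisors, W q * (ramanujanSum q a : ℂ)
      = ∑ e ∈ a.divisors, ∑ m ∈ (sKer P).divisors, (moebius m : ℂ) * (e * W (e*m)) := by
  have hQ := sKer_pos P
  have hT : a * sKer P ≠ 0 := by positivity
  have hsm : IsSmooth P (a * sKer P) := isSmooth_mul (smooth_of_le ha haP) (smooth_sKer P)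
  have step1 : ∀ q ∈ (a * sKer P).divisors,
      W q * (ramanujanSum q a : ℂ)
        = ∑ e ∈ a.divisors, (if e ∣ q then W q * (e * (moebius (q/e) : ℂ)) else 0) := by
    intro q hq
    have hq0 : q ≠ 0 := (Nat.pos_of_mem_divisors hq).ne'
    rw [← Finset.sum_filter, divisors_filter_dvd ha.ne' hq0]
    unfold ramanujanSum
    push_cast
    rw [Finset.mul_sum]
  rw [Finset.sum_congr rfl step1, Finset.sum_comm]
  apply Finset.sum_congr rfl
  intro e he
  obtain ⟨hea, _⟩ := Nat.mem_divisors.mp he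
  have heT : e ∣ a * sKer P := hea.trans (dvd_mul_right a (sKer P))
  have he0 : e ≠ 0 := (Nat.pos_of_mem_divisors he).ne'
  rw [← Finset.sum_filter, sum_divisors_mul e _ heT hT]
  have hcanc : ∀ m : ℕ, e * m / e = m :=
    fun m => Nat.mul_div_cancel_left m (Nat.pos_of_ne_zero he0)
  simp only [hcanc]
  have hQT : sKer P ∣ (a * sKer P) / e := by
    rw [Nat.mul_comm a (sKer P), Nat.mul_div_assoc (sKer P) hea]
    exact dvd_mul_right _ _
  have hTe : (a * sKer P) / e ≠ 0 :=
    Nat.div_ne_zero_iff.mpr ⟨he0, Nat.le_of_dvd (Nat.pos_of_ne_zero hT) heT⟩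
  rw [← Finset.sum_subset (Nat.divisors_subset_of_dvd hTe hQT)]
  · apply Finset.sum_congr rfl
    intro m _
    ring
  · intro m hm hnm
    have hmT : m ∣ (a * sKer P) / e := (Nat.mem_divisors.mp hm).1
    by_cases hsq : Squarefree m
    · exfalso
      apply hnm
      have : m ∣ a * sKer P := hmT.trans (Nat.div_dvd_of_dvd heT)
      exact Nat.mem_divisors.mpr ⟨dvd_sKer hsq (smooth_of_dvd this hsm), hQ.ne'⟩
    · rw [ArithmeticFunction.moebius_eq_zero_of_not_squarefree hsq]
      simp

end Aux

open ArithmeticFunction in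
/-- (Wintner orthogonal decomposition for `F`.) If all Wintner coefficients
`W q` exist, then for every `a ≥ 1` and every prime `P ≥ a`, the irregular series
`Irr_d = ∑_{r P-sifted, r>1} F'(dr)/r` converge for each `d | a` and
`F(a) = ∑_{q P-smooth} W(q) c_q(a) − ∑_{d | a} Irr_d`. -/
theorem stmt8 (F : ℕ → ℂ) (W : ℕ → ℂ)
    (hW : ∀ q : ℕ, 0 < q →
      Tendsto (fun x : ℕ => ∑ d ∈ Finset.Icc 1 x, if q ∣ d then eratosthenes F d / d else 0)
        atTop (nhds (W q)))
    (a : ℕ) (ha : 0 < a) (P : ℕ) (hP : P.Prime) (haP : a ≤ P) :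
    ∃ I : ℕ → ℂ,
      (∀ d ∈ a.divisors,
        Tendsto
          (fun x : ℕ =>
            ∑ r ∈ Finset.Icc 2 x, if IsSifted P r then eratosthenes F (d * r) / r else 0)
          atTop (nhds (I d))) ∧
      F a = (∑' q : {q : ℕ // 0 < q ∧ IsSmooth P q}, W (q : ℕ) * (ramanujanSum (q : ℕ) a : ℂ))
              - ∑ d ∈ a.divisors, I d := by
  refine ⟨fun d => (∑ m ∈ (sKer P).divisors, (moebius m : ℂ) * (d * W (d*m)))
      - eratosthenes F d, ?_, ?_⟩
  · intro d hd
    have hd0 : 0 < d := Nat.pos_of_mem_divisors hd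
    have hbig := tendsto_sifted F W hW P d hd0
    have hsub := hbig.sub_const (eratosthenes F d)
    apply hsub.congr'
    rw [Filter.eventuallyEq_iff_exists_mem]
    refine ⟨Set.Ici 1, Filter.mem_atTop 1, ?_⟩
    intro x hx
    have hx1 : (1 : ℕ) ≤ x := hx
    have hins : Finset.Icc 1 x = insert 1 (Finset.Icc 2 x) := by
      ext r
      simp only [Finset.mem_Icc, Finset.mem_insert]
      omega
    have h1not : (1 : ℕ) ∉ Finset.Icc 2 x := by simp
    have hsift1 : IsSifted P 1 := by
      intro p pp hp
      exact absurd (Nat.eq_one_of_dvd_one hp) pp.one_lt.ne'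
    simp only [hins, Finset.sum_insert h1not, if_pos hsift1, Nat.mul_one, Nat.cast_one, div_one]
    ring
  · rw [tsum_smooth W ha haP, main_id W ha haP, Finset.sum_sub_distrib,
      sum_eratosthenes F a ha]
    ring
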